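/- In the square lattice Z², consider the half-plane Z × Z≥0. If a path P in an edge subgraph H connects (x₁, 0) to (x₂, 0) with x₁ ≤ −1 and x₂ ≥ 1, and P stays in the closed upper half-plane and passes only through vertices with y ≥ 1 except at its endpoints, then the plaquette (face) centered at (1/2, 1/2) lies inside the bounded region enclosed by P together with the segment of the x-axis from (x₁,0) to (x₂,0); consequently any dual path from this plaquette to infinity must cross either P or the x-axis segment. -/

import Mathlib

/-- Nearest-neighbor adjacency on `ℤ²` (used for both the primal lattice and the
dual lattice of plaquettes, where the plaquette `(a, b)` has center `(a+1/2, b+1/2)`). -/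
def latAdj (u v : ℤ × ℤ) : Prop :=
  (u.1 - v.1).natAbs + (u.2 - v.2).natAbs = 1

/-- The primal edge crossed by the dual edge between adjacent plaquettes `a` and `b`. -/
def crossedEdge (a b : ℤ × ℤ) : Sym2 (ℤ × ℤ) :=
  if a.1 + 1 = b.1 then s(((b.1, b.2) : ℤ × ℤ), ((b.1, b.2 + 1) : ℤ × ℤ))
  else if b.1 + 1 = a.1 then s(((a.1, a.2) : ℤ × ℤ), ((a.1, a.2 + 1) : ℤ × ℤ))
  else if a.2 + 1 = b.2 then s(((a.1, b.2) : ℤ × ℤ), ((a.1 + 1, b.2) : ℤ × ℤ))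
  else s(((b.1, a.2) : ℤ × ℤ), ((b.1 + 1, a.2) : ℤ × ℤ))

/-- Indicator (mod 2) that the edge `{u,v}` is the horizontal edge `((a,y),(a+1,y))`
for some `0 ≤ y ≤ b`, i.e. that it is crossed by the downward ray from `(a+1/2, b+1/2)`. -/
def hcr (a b : ℤ) (u v : ℤ × ℤ) : ZMod 2 :=
  if u.2 = v.2 ∧ 0 ≤ u.2 ∧ u.2 ≤ b ∧ ((u.1 = a ∧ v.1 = a + 1) ∨ (v.1 = a ∧ u.1 = a + 1))
  then 1 else 0

/-- Indicator that a vertex lies in the column segment `{a+1} × [0,b]`. -/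
def gI (a b : ℤ) (u : ℤ × ℤ) : ZMod 2 := if u.1 = a + 1 ∧ 0 ≤ u.2 ∧ u.2 ≤ b then 1 else 0

/-- Indicator that the edge `{u,v}` is the horizontal edge `((a,b+1),(a+1,b+1))`. -/
def hI (a b : ℤ) (u v : ℤ × ℤ) : ZMod 2 :=
  if s(u, v) = s(((a, b + 1) : ℤ × ℤ), ((a + 1, b + 1) : ℤ × ℤ)) then 1 else 0

/-- Indicator that the edge `{u,v}` is the vertical edge `((a+1,b),(a+1,b+1))`. -/
def vI (a b : ℤ) (u v : ℤ × ℤ) : ZMod 2 :=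
  if s(u, v) = s(((a + 1, b) : ℤ × ℤ), ((a + 1, b + 1) : ℤ × ℤ)) then 1 else 0

lemma zmod2_cancel : ∀ x y : ZMod 2, x + y = 0 → x = y := by decide

set_option maxHeartbeats 1000000 in
lemma vert_step (a b : ℤ) (hb : 0 ≤ b) (u v : ℤ × ℤ) :
    hcr a (b + 1) u v = hcr a b u v + hI a b u v := by
  obtain ⟨ux, uy⟩ := u; obtain ⟨vx, vy⟩ := v
  simp only [hcr, hI, Sym2.eq_iff, Prod.mk.injEq]
  split_ifs <;> first | rfl | (exfalso; omega)

set_option maxHeartbeats 1000000 in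
lemma horiz_step (a b : ℤ) (u v : ℤ × ℤ) (huv : latAdj u v)
    (hu : 0 ≤ u.2) (hv : 0 ≤ v.2) :
    gI a b u + gI a b v = hcr a b u v + hcr (a + 1) b u v + vI a b u v := by
  obtain ⟨ux, uy⟩ := u; obtain ⟨vx, vy⟩ := v
  simp only [latAdj] at huv
  simp only at hu hv
  have hcase : (vx = ux + 1 ∧ vy = uy) ∨ (ux = vx + 1 ∧ vy = uy) ∨
      (vx = ux ∧ vy = uy + 1) ∨ (vx = ux ∧ uy = vy + 1) := by omega
  clear huv
  simp only [gI, hcr, vI, Sym2.eq_iff, Prod.mk.injEq]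
  rcases hcase with ⟨h1, h2⟩ | ⟨h1, h2⟩ | ⟨h1, h2⟩ | ⟨h1, h2⟩ <;> subst h1 h2 <;>
    split_ifs <;> first | rfl | (exfalso; omega)

set_option maxHeartbeats 1000000 in
lemma col_step (a b : ℤ) (u v : ℤ × ℤ) (huv : latAdj u v)
    (hu : 0 ≤ u.2) (hub : u.2 ≤ b) (hv : 0 ≤ v.2) (hvb : v.2 ≤ b) :
    hcr a b u v = (if u.1 ≤ a then (1 : ZMod 2) else 0) + (if v.1 ≤ a then 1 else 0) := by
  obtain ⟨ux, uy⟩ := u; obtain ⟨vx, vy⟩ := v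
  simp only [latAdj] at huv
  simp only at hu hub hv hvb
  have hcase : (vx = ux + 1 ∧ vy = uy) ∨ (ux = vx + 1 ∧ vy = uy) ∨
      (vx = ux ∧ vy = uy + 1) ∨ (vx = ux ∧ uy = vy + 1) := by omega
  clear huv
  simp only [hcr]
  rcases hcase with ⟨h1, h2⟩ | ⟨h1, h2⟩ | ⟨h1, h2⟩ | ⟨h1, h2⟩ <;> subst h1 h2 <;>
    split_ifs <;> first | rfl | (exfalso; omega)

lemma sum_pair (L : ℕ) (P : ℕ → ℤ × ℤ) (f : ℤ × ℤ → ZMod 2) :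
    ∑ i ∈ Finset.range L, (f (P i) + f (P (i + 1))) = f (P 0) + f (P L) := by
  have h : ∀ i ∈ Finset.range L, f (P i) + f (P (i + 1)) = f (P (i + 1)) - f (P i) := by
    intro i _
    generalize f (P i) = x; generalize f (P (i + 1)) = y; revert x y; decide
  rw [Finset.sum_congr rfl h, Finset.sum_range_sub (fun i => f (P i))]
  generalize f (P L) = x; generalize f (P 0) = y; revert x y; decide

/-- Topological blocking fact of Proposition 2.7 (Figure 3): if a path `p` in the
closed upper half-plane joins `(x₁, 0)` to `(x₂, 0)` with `x₁ ≤ −1`, `x₂ ≥ 1`,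
passing only through vertices with `y ≥ 1` except at its endpoints, then any dual
path of plaquettes starting at the plaquette `(0,0)` (centered at `(1/2, 1/2)`),
staying in the half-plane and escaping to infinity, must cross either an edge of `p`
or an edge of the `x`-axis segment from `(x₁, 0)` to `(x₂, 0)`. -/
theorem stmt_12 (x₁ x₂ : ℤ) (hx₁ : x₁ ≤ -1) (hx₂ : 1 ≤ x₂)
    (L : ℕ) (p : Fin (L + 1) → ℤ × ℤ)
    (hp0 : p 0 = (x₁, 0)) (hpL : p (Fin.last L) = (x₂, 0))
    (hpadj : ∀ i : Fin L, latAdj (p i.castSucc) (p i.succ))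
    (hpy : ∀ i, 0 ≤ (p i).2)
    (hpint : ∀ i : Fin (L + 1), i ≠ 0 → i ≠ Fin.last L → 1 ≤ (p i).2)
    (q : ℕ → ℤ × ℤ) (hq0 : q 0 = (0, 0))
    (hqadj : ∀ n : ℕ, latAdj (q n) (q (n + 1)))
    (hqy : ∀ n : ℕ, 0 ≤ (q n).2)
    (hqinf : ∀ R : ℤ, ∃ n, R < ((q n).1.natAbs : ℤ) + (q n).2) :
    ∃ n : ℕ,
      (∃ i : Fin L, crossedEdge (q n) (q (n + 1)) = s(p i.castSucc, p i.succ)) ∨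
      (∃ x : ℤ, x₁ ≤ x ∧ x + 1 ≤ x₂ ∧
        crossedEdge (q n) (q (n + 1)) = s(((x, 0) : ℤ × ℤ), ((x + 1, 0) : ℤ × ℤ))) := by
  classical
  by_contra hcon
  push_neg at hcon
  -- reindex the path over ℕ
  have hL1 : ∀ n : ℕ, min n L < L + 1 := fun n => by omega
  set P : ℕ → ℤ × ℤ := fun n => p ⟨min n L, hL1 n⟩ with hPdef
  have hPe : ∀ (i : ℕ) (h : i ≤ L), P i = p ⟨i, by omega⟩ := by
    intro i h
    simp only [hPdef]
    congr 1
    exact Fin.ext (by simp [Nat.min_eq_left h])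
  have hP0 : P 0 = (x₁, 0) := by
    rw [hPe 0 (by omega)]
    rw [show (⟨0, by omega⟩ : Fin (L + 1)) = 0 from Fin.ext (by simp)]
    exact hp0
  have hPL : P L = (x₂, 0) := by
    rw [hPe L le_rfl]
    rw [show (⟨L, by omega⟩ : Fin (L + 1)) = Fin.last L from Fin.ext (by simp)]
    exact hpL
  have hPadj : ∀ i : ℕ, i < L → latAdj (P i) (P (i + 1)) := by
    intro i hi
    rw [hPe i hi.le, hPe (i + 1) hi]
    exact hpadj ⟨i, hi⟩
  have hPy : ∀ i : ℕ, 0 ≤ (P i).2 := fun i => hpy _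
  have hPint : ∀ i : ℕ, i ≤ L → (P i).2 = 0 → i = 0 ∨ i = L := by
    intro i h hz
    by_contra hne
    push_neg at hne
    rw [hPe i h] at hz
    have h1 : (⟨i, by omega⟩ : Fin (L + 1)) ≠ 0 := by
      simp only [ne_eq, Fin.ext_iff, Fin.val_zero]
      exact hne.1
    have h2 : (⟨i, by omega⟩ : Fin (L + 1)) ≠ Fin.last L := by
      simp only [ne_eq, Fin.ext_iff, Fin.val_last]
      exact hne.2
    have := hpint ⟨i, by omega⟩ h1 h2
    omega
  have hnc : ∀ n : ℕ, ∀ i : ℕ, i < L →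
      s(P i, P (i + 1)) ≠ crossedEdge (q n) (q (n + 1)) := by
    intro n i hi hEq
    apply (hcon n).1 ⟨i, hi⟩
    rw [← hEq, hPe i hi.le, hPe (i + 1) hi]
    rfl
  -- the mod-2 crossing count of the downward ray from the plaquette (a,b)
  set F : ℤ → ℤ → ZMod 2 := fun a b =>
    (∑ i ∈ Finset.range L, hcr a b (P i) (P (i + 1))) +
      (if x₁ ≤ a ∧ a + 1 ≤ x₂ ∧ 0 ≤ b then 1 else 0) with hFdef
  -- invariance under a vertical dual step
  have hvert : ∀ a b : ℤ, 0 ≤ b →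
      (∀ i : ℕ, i < L → s(P i, P (i + 1)) ≠ s(((a, b + 1) : ℤ × ℤ), ((a + 1, b + 1) : ℤ × ℤ))) →
      F a (b + 1) = F a b := by
    intro a b hb hno
    simp only [hFdef]
    have h1 : ∑ i ∈ Finset.range L, hcr a (b + 1) (P i) (P (i + 1)) =
        ∑ i ∈ Finset.range L, hcr a b (P i) (P (i + 1)) := by
      apply Finset.sum_congr rfl
      intro i hi
      rw [vert_step a b hb]
      rw [show hI a b (P i) (P (i + 1)) = 0 from
        by rw [hI, if_neg (hno i (Finset.mem_range.mp hi))], add_zero]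
    rw [h1]
    congr 1
    split_ifs <;> first | rfl | (exfalso; omega)
  -- invariance under a horizontal dual step
  have hhor : ∀ a b : ℤ, 0 ≤ b →
      (∀ i : ℕ, i < L → s(P i, P (i + 1)) ≠ s(((a + 1, b) : ℤ × ℤ), ((a + 1, b + 1) : ℤ × ℤ))) →
      F a b = F (a + 1) b := by
    intro a b hb hno
    apply zmod2_cancel
    simp only [hFdef]
    have key : (∑ i ∈ Finset.range L, hcr a b (P i) (P (i + 1))) +
        (∑ i ∈ Finset.range L, hcr (a + 1) b (P i) (P (i + 1))) =
        gI a b (P 0) + gI a b (P L) := by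
      rw [← Finset.sum_add_distrib, ← sum_pair L P (gI a b)]
      apply Finset.sum_congr rfl
      intro i hi
      have hi' := Finset.mem_range.mp hi
      have hstep := horiz_step a b (P i) (P (i + 1)) (hPadj i hi') (hPy i) (hPy (i + 1))
      rw [show vI a b (P i) (P (i + 1)) = 0 from
        by rw [vI, if_neg (hno i hi')], add_zero] at hstep
      exact hstep.symm
    have hre : ∀ S1 A1 S2 A2 : ZMod 2, (S1 + A1) + (S2 + A2) = (S1 + S2) + (A1 + A2) := by
      intros; ring
    rw [hre, key, hP0, hPL]
    simp only [gI]
    split_ifs <;> first | rfl | decide | (exfalso; omega)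
  -- initial value
  have hF0 : F 0 0 = 1 := by
    simp only [hFdef]
    have h1 : ∑ i ∈ Finset.range L, hcr 0 0 (P i) (P (i + 1)) = 0 := by
      apply Finset.sum_eq_zero
      intro i hi
      have hi' := Finset.mem_range.mp hi
      rw [hcr, if_neg]
      rintro ⟨he, h0, hle, hcol⟩
      have hz1 : (P i).2 = 0 := le_antisymm hle h0
      have hz2 : (P (i + 1)).2 = 0 := by omega
      have e1 := hPint i (by omega) hz1
      have e2 := hPint (i + 1) (by omega) hz2
      have hi0 : i = 0 := by omega
      have hiL : i + 1 = L := by omega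
      have c1 : (P i).1 = x₁ := by rw [hi0, hP0]
      have c2 : (P (i + 1)).1 = x₂ := by rw [hiL, hPL]
      omega
    rw [h1, zero_add, if_pos ⟨by omega, by omega, le_refl (0 : ℤ)⟩]
  -- F is constantly 1 along the dual path
  have hqF : ∀ n : ℕ, F (q n).1 (q n).2 = 1 := by
    intro n
    induction n with
    | zero => rw [hq0]; exact hF0
    | succ n ih =>
      have hadj := hqadj n
      simp only [latAdj] at hadj
      have hb : 0 ≤ (q n).2 := hqy n
      have hb' : 0 ≤ (q (n + 1)).2 := hqy (n + 1)
      have hcase : ((q (n + 1)).1 = (q n).1 + 1 ∧ (q (n + 1)).2 = (q n).2) ∨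
          ((q (n + 1)).1 = (q n).1 - 1 ∧ (q (n + 1)).2 = (q n).2) ∨
          ((q (n + 1)).1 = (q n).1 ∧ (q (n + 1)).2 = (q n).2 + 1) ∨
          ((q (n + 1)).1 = (q n).1 ∧ (q (n + 1)).2 = (q n).2 - 1) := by omega
      rcases hcase with ⟨h1, h2⟩ | ⟨h1, h2⟩ | ⟨h1, h2⟩ | ⟨h1, h2⟩
      · -- right step
        have hce : crossedEdge (q n) (q (n + 1)) =
            s((((q n).1 + 1, (q n).2) : ℤ × ℤ), (((q n).1 + 1, (q n).2 + 1) : ℤ × ℤ)) := by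
          simp only [crossedEdge, if_pos h1.symm]
          rw [h1, h2]
        rw [h1, h2, ← hhor (q n).1 (q n).2 hb (fun i hi hEq => hnc n i hi (hEq.trans hce.symm))]
        exact ih
      · -- left step
        have e : (q n).1 - 1 + 1 = (q n).1 := by ring
        have hce : crossedEdge (q n) (q (n + 1)) =
            s((((q n).1, (q n).2) : ℤ × ℤ), (((q n).1, (q n).2 + 1) : ℤ × ℤ)) := by
          simp only [crossedEdge, if_neg (show ¬((q n).1 + 1 = (q (n + 1)).1) by omega),
            if_pos (show (q (n + 1)).1 + 1 = (q n).1 by omega)]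
        have hno : ∀ i : ℕ, i < L → s(P i, P (i + 1)) ≠
            s((((q n).1 - 1 + 1, (q n).2) : ℤ × ℤ), (((q n).1 - 1 + 1, (q n).2 + 1) : ℤ × ℤ)) := by
          intro i hi hEq
          rw [e] at hEq
          exact hnc n i hi (hEq.trans hce.symm)
        have := hhor ((q n).1 - 1) (q n).2 hb hno
        rw [e] at this
        rw [h1, h2, this]
        exact ih
      · -- up step
        have hce : crossedEdge (q n) (q (n + 1)) =
            s((((q n).1, (q n).2 + 1) : ℤ × ℤ), (((q n).1 + 1, (q n).2 + 1) : ℤ × ℤ)) := by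
          simp only [crossedEdge, if_neg (show ¬((q n).1 + 1 = (q (n + 1)).1) by omega),
            if_neg (show ¬((q (n + 1)).1 + 1 = (q n).1) by omega),
            if_pos (show (q n).2 + 1 = (q (n + 1)).2 by omega)]
          rw [h2]
        rw [h1, h2, hvert (q n).1 (q n).2 hb (fun i hi hEq => hnc n i hi (hEq.trans hce.symm))]
        exact ih
      · -- down step
        have e : (q n).2 - 1 + 1 = (q n).2 := by ring
        have hce : crossedEdge (q n) (q (n + 1)) =
            s((((q n).1, (q n).2) : ℤ × ℤ), (((q n).1 + 1, (q n).2) : ℤ × ℤ)) := by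
          simp only [crossedEdge, if_neg (show ¬((q n).1 + 1 = (q (n + 1)).1) by omega),
            if_neg (show ¬((q (n + 1)).1 + 1 = (q n).1) by omega),
            if_neg (show ¬((q n).2 + 1 = (q (n + 1)).2) by omega)]
          rw [h1]
        have hno : ∀ i : ℕ, i < L → s(P i, P (i + 1)) ≠
            s((((q n).1, (q n).2 - 1 + 1) : ℤ × ℤ), (((q n).1 + 1, (q n).2 - 1 + 1) : ℤ × ℤ)) := by
          intro i hi hEq
          rw [e] at hEq
          exact hnc n i hi (hEq.trans hce.symm)
        have := hvert (q n).1 ((q n).2 - 1) (by omega) hno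
        rw [e] at this
        rw [h1, h2, ← this]
        exact ih
  -- a bound on the path
  set Bn : ℕ := Finset.univ.sup (fun i : Fin (L + 1) => (p i).1.natAbs + (p i).2.toNat)
    with hBdef
  have hBnd : ∀ i : ℕ, i ≤ L → (P i).1.natAbs ≤ Bn ∧ (P i).2 ≤ (Bn : ℤ) := by
    intro i h
    have hle : (fun j : Fin (L + 1) => (p j).1.natAbs + (p j).2.toNat) ⟨min i L, hL1 i⟩ ≤ Bn :=
      Finset.le_sup (f := fun j : Fin (L + 1) => (p j).1.natAbs + (p j).2.toNat)
        (Finset.mem_univ (⟨min i L, hL1 i⟩ : Fin (L + 1)))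
    simp only at hle
    have hy := hpy ⟨min i L, hL1 i⟩
    simp only [hPdef]
    omega
  have hx1B : x₁.natAbs ≤ Bn := by
    have := (hBnd 0 (by omega)).1
    rw [hP0] at this
    exact this
  have hx2B : x₂.natAbs ≤ Bn := by
    have := (hBnd L le_rfl).1
    rw [hPL] at this
    exact this
  -- go far away
  obtain ⟨n, hn⟩ := hqinf (2 * (Bn : ℤ) + 2)
  have h1 := hqF n
  have hb : 0 ≤ (q n).2 := hqy n
  have hF0' : F (q n).1 (q n).2 = 0 := by
    by_cases hcb : (Bn : ℤ) ≤ (q n).2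
    · -- above everything: full-column parity
      simp only [hFdef]
      have hs : ∑ i ∈ Finset.range L, hcr (q n).1 (q n).2 (P i) (P (i + 1)) =
          (fun u : ℤ × ℤ => if u.1 ≤ (q n).1 then (1 : ZMod 2) else 0) (P 0) +
          (fun u : ℤ × ℤ => if u.1 ≤ (q n).1 then (1 : ZMod 2) else 0) (P L) := by
        rw [← sum_pair L P (fun u : ℤ × ℤ => if u.1 ≤ (q n).1 then (1 : ZMod 2) else 0)]
        apply Finset.sum_congr rfl
        intro i hi
        have hi' := Finset.mem_range.mp hi
        exact col_step (q n).1 (q n).2 _ _ (hPadj i hi') (hPy i)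
          ((hBnd i hi'.le).2.trans hcb) (hPy (i + 1)) ((hBnd (i + 1) hi').2.trans hcb)
      rw [hs, hP0, hPL]
      simp only
      split_ifs <;> first | rfl | decide | (exfalso; omega)
    · -- far to the side: empty column
      have haB : (Bn : ℤ) + 2 ≤ (q n).1 ∨ (q n).1 ≤ -(Bn : ℤ) - 2 := by omega
      simp only [hFdef]
      have hs : ∑ i ∈ Finset.range L, hcr (q n).1 (q n).2 (P i) (P (i + 1)) = 0 := by
        apply Finset.sum_eq_zero
        intro i hi
        have hi' := Finset.mem_range.mp hi
        have b1 := (hBnd i hi'.le).1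
        have b2 := (hBnd (i + 1) hi').1
        rw [hcr, if_neg]
        rintro ⟨-, -, -, hcol⟩
        omega
      rw [hs, zero_add, if_neg]
      rintro ⟨g1, g2, -⟩
      omega
  rw [hF0'] at h1
  exact absurd h1 (by decide)
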